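/- Let H be a real Hilbert space with dim H ≥ 3. Let T, S : H̲ → H̲ be bijective transformations of the set of rays of H (in the real case the ray of x is {x, −x}) satisfying T x̲ · S y̲ = x̲ · y̲ for all rays x̲, y̲ ∈ H̲, where x̲ · y̲ = |⟨x, y⟩|. Then there exist bounded invertible linear operators U, V : H → H such that T x̲ is the ray of Ux and S x̲ is the ray of Vx for every x ∈ H, and V = (U*)⁻¹, i.e. ⟨Ux, Vy⟩ = ⟨x, y⟩ for all x, y ∈ H. -/

import Mathlib

/-
STATEMENT 3: Wigner-type theorem for pairs of ray transformations on a real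
Hilbert space of dimension ≥ 3 (the ray of x is {x, -x}).
-/

local notation "⟪" x ", " y "⟫" => @inner ℝ _ _ x y

/-- The ray associated with a vector `x` in a real space: `{x, -x}`. -/
def ray {H : Type*} [NormedAddCommGroup H] [InnerProductSpace ℝ H] (x : H) : Set H :=
  {x, -x}

/-- The set of all rays of `H`. -/
abbrev RaySpace (H : Type*) [NormedAddCommGroup H] [InnerProductSpace ℝ H] : Type _ :=
  {s : Set H // ∃ x : H, s = ray x}

noncomputable def msgn (r : ℝ) : ℝ := if 0 < r then 1 else -1

lemma msgn_pm (r : ℝ) : msgn r = 1 ∨ msgn r = -1 := by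
  unfold msgn; split <;> simp

lemma msgn_mul_self (r : ℝ) : msgn r * r = |r| := by
  unfold msgn; split_ifs with h
  · rw [one_mul, abs_of_pos h]
  · push_neg at h; rw [abs_of_nonpos h]; ring

lemma pos_of_mul_pos_aux {X Y : ℝ} (h : 0 < X * Y) (hY : 0 < Y) : 0 < X := by
  nlinarith

lemma msgn3_pos {A B C D : ℝ} (hA : A ≠ 0) (hB : B ≠ 0) (hC : C ≠ 0)
    (h : 0 < A * B * C * D) : 0 < msgn A * (msgn B * msgn C) * D := by
  have hD : D ≠ 0 := by rintro rfl; simp at h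
  have key : (msgn A * (msgn B * msgn C) * D) * (A * B * C * D)
      = (|A| * |B| * |C|) * D ^ 2 := by
    rw [← msgn_mul_self A, ← msgn_mul_self B, ← msgn_mul_self C]; ring
  have hpos : 0 < (|A| * |B| * |C|) * D ^ 2 :=
    mul_pos (mul_pos (mul_pos (abs_pos.mpr hA) (abs_pos.mpr hB)) (abs_pos.mpr hC))
      (lt_of_le_of_ne (sq_nonneg D) (Ne.symm (pow_ne_zero 2 hD)))
  rw [← key] at hpos
  exact pos_of_mul_pos_aux hpos h

lemma exists_inner_ne_zero {H : Type*} [NormedAddCommGroup H] [InnerProductSpace ℝ H]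
    (l : List H) (hl : ∀ w ∈ l, w ≠ 0) : ∃ v : H, ∀ w ∈ l, ⟪w, v⟫ ≠ 0 := by
  induction l with
  | nil => exact ⟨0, by simp⟩
  | cons w l ih =>
    obtain ⟨v, hv⟩ := ih (fun u hu => hl u (List.mem_cons_of_mem _ hu))
    have hw : w ≠ 0 := hl w List.mem_cons_self
    obtain ⟨t, ht⟩ := Infinite.exists_notMem_finset
      (((w :: l).map fun u => -⟪u, v⟫ / ⟪u, w⟫).toFinset)
    refine ⟨v + t • w, ?_⟩
    intro u hu
    rw [inner_add_right, real_inner_smul_right]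
    by_cases huw : ⟪u, w⟫ = 0
    · rcases List.mem_cons.mp hu with rfl | hu'
      · exact absurd (inner_self_eq_zero.mp huw) hw
      · rw [huw, mul_zero, add_zero]; exact hv u hu'
    · intro hzero
      apply ht
      refine List.mem_toFinset.mpr (List.mem_map.mpr ⟨u, hu, ?_⟩)
      field_simp
      linarith
    
lemma prod4_eq_zero {H : Type*} [NormedAddCommGroup H] [InnerProductSpace ℝ H]
    (w1 w2 w3 w4 : H) (h : ∀ v : H, ⟪w1, v⟫ * ⟪w2, v⟫ * (⟪w3, v⟫ * ⟪w4, v⟫) = 0) :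
    w1 = 0 ∨ w2 = 0 ∨ w3 = 0 ∨ w4 = 0 := by
  by_contra hc
  push_neg at hc
  obtain ⟨h1, h2, h3, h4⟩ := hc
  obtain ⟨v, hv⟩ := exists_inner_ne_zero [w1, w2, w3, w4]
    (by intro u hu; fin_cases hu <;> assumption)
  exact mul_ne_zero (mul_ne_zero (hv w1 (by simp)) (hv w2 (by simp)))
    (mul_ne_zero (hv w3 (by simp)) (hv w4 (by simp))) (h v)


lemma sq_resolve {E c : ℝ} (hE2 : E ^ 2 = c ^ 2) (hEc : 0 < E * c) : E = c := by
  have h0 : (E - c) * (E + c) = 0 := by linear_combination hE2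
  rcases mul_eq_zero.mp h0 with h | h
  · exact sub_eq_zero.mp h
  · exfalso
    have hE : E = -c := eq_neg_of_add_eq_zero_left h
    rw [hE] at hEc
    nlinarith [mul_self_nonneg c]

lemma sign_resolve {e d P c : ℝ} (he : e = 1 ∨ e = -1) (hd : d = 1 ∨ d = -1)
    (hP : P = c ∨ P = -c) (hM : 0 < e * d * (P * c)) : e * d * P = c := by
  have he2 : e ^ 2 = 1 := by rcases he with rfl | rfl <;> norm_num
  have hd2 : d ^ 2 = 1 := by rcases hd with rfl | rfl <;> norm_num
  have hP2 : P ^ 2 = c ^ 2 := by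
    rcases hP with h | h
    · rw [h]
    · rw [h]; ring
  apply sq_resolve
  · rw [mul_pow, mul_pow, he2, hd2, hP2]; ring
  · rw [mul_assoc]; exact hM

theorem wigner_aux {H : Type*} [NormedAddCommGroup H] [InnerProductSpace ℝ H]
    [CompleteSpace H] (a : H) (ha : a ≠ 0) (f g : H → H)
    (hfg : ∀ x y : H, ⟪f x, g y⟫ ^ 2 = ⟪x, y⟫ ^ 2)
    (hfs : ∀ v : H, ∃ x, f x = v ∨ f x = -v)
    (hgs : ∀ v : H, ∃ y, g y = v ∨ g y = -v) :
    ∃ U V : H ≃L[ℝ] H,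
      (∀ x, (U : H → H) x = f x ∨ (U : H → H) x = -f x) ∧
      (∀ y, (V : H → H) y = g y ∨ (V : H → H) y = -g y) ∧
      (∀ x y, ⟪(U : H → H) x, (V : H → H) y⟫ = ⟪x, y⟫) := by
  -- inner products vanish together
  have hvan : ∀ x y : H, ⟪x, y⟫ = 0 → ⟪f x, g y⟫ = 0 := by
    intro x y hxy
    have := hfg x y
    rw [hxy] at this
    simpa [pow_eq_zero_iff] using this
  have hne : ∀ x y : H, ⟪x, y⟫ ≠ 0 → ⟪f x, g y⟫ ≠ 0 := by
    intro x y hxy h0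
    have := hfg x y
    rw [h0] at this
    exact hxy (by simpa [pow_eq_zero_iff, Eq.comm] using this)
  -- quasi-additivity of f
  have QA : ∀ x x' : H, ∃ s t : ℝ, (s = 1 ∨ s = -1) ∧ (t = 1 ∨ t = -1) ∧
      f (x + x') = s • f x + t • f x' := by
    intro x x'
    have h4 : ∀ v : H,
        ⟪f (x + x') - f x - f x', v⟫ * ⟪f (x + x') + f x + f x', v⟫ *
          (⟪f (x + x') - f x + f x', v⟫ * ⟪f (x + x') + f x - f x', v⟫) = 0 := by
      intro v
      obtain ⟨y, hy⟩ := hgs v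
      have hsq : ∀ z : H, ⟪f z, v⟫ ^ 2 = ⟪z, y⟫ ^ 2 := by
        intro z
        rcases hy with h | h
        · rw [← h]; exact hfg z y
        · have hv : v = -g y := by rw [h, neg_neg]
          rw [hv, inner_neg_right, neg_sq]; exact hfg z y
      have e1 := hsq (x + x')
      have e2 := hsq x
      have e3 := hsq x'
      rw [inner_add_left] at e1
      simp only [inner_sub_left, inner_add_left]
      nlinarith [e1, e2, e3, sq_nonneg (⟪f (x+x'), v⟫ + ⟪f x, v⟫),
        sq_nonneg (⟪f (x+x'), v⟫ - ⟪f x, v⟫)]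
    rcases prod4_eq_zero _ _ _ _ h4 with h | h | h | h
    · refine ⟨1, 1, Or.inl rfl, Or.inl rfl, ?_⟩
      rw [sub_sub] at h
      simpa using sub_eq_zero.mp h
    · refine ⟨-1, -1, Or.inr rfl, Or.inr rfl, ?_⟩
      rw [add_assoc] at h
      rw [eq_neg_of_add_eq_zero_left h, neg_one_smul, neg_one_smul]; abel
    · refine ⟨1, -1, Or.inl rfl, Or.inr rfl, ?_⟩
      rw [sub_add] at h
      rw [sub_eq_zero.mp h, one_smul, neg_one_smul]; abel
    · refine ⟨-1, 1, Or.inr rfl, Or.inl rfl, ?_⟩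
      have h' : f (x + x') - (f x' - f x) = 0 := by
        rw [show f (x + x') - (f x' - f x) = f (x + x') + f x - f x' by abel]
        exact h
      rw [sub_eq_zero.mp h', neg_one_smul, one_smul]; abel
  -- the four-point sign identity
  have K : ∀ x x' y y' : H, ⟪x, y⟫ ≠ 0 → ⟪x', y⟫ ≠ 0 → ⟪x, y'⟫ ≠ 0 → ⟪x', y'⟫ ≠ 0 →
      0 < (⟪f x, g y⟫ * ⟪x, y⟫) * (⟪f x', g y⟫ * ⟪x', y⟫) *
        ((⟪f x, g y'⟫ * ⟪x, y'⟫) * (⟪f x', g y'⟫ * ⟪x', y'⟫)) := by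
    intro x x' y y' h1 h2 h3 h4
    obtain ⟨s, t, hs, ht, hF⟩ := QA x x'
    have hs2 : s ^ 2 = 1 := by rcases hs with rfl | rfl <;> norm_num
    have ht2 : t ^ 2 = 1 := by rcases ht with rfl | rfl <;> norm_num
    have key : ∀ u : H, ⟪f x, g u⟫ * ⟪f x', g u⟫ = s * t * (⟪x, u⟫ * ⟪x', u⟫) := by
      intro u
      have hA : ⟪f (x + x'), g u⟫ = s * ⟪f x, g u⟫ + t * ⟪f x', g u⟫ := by
        rw [hF, inner_add_left, real_inner_smul_left, real_inner_smul_left]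
      have h2A := hfg (x + x') u
      rw [hA, inner_add_left] at h2A
      have hB := hfg x u
      have hC := hfg x' u
      rcases hs with rfl | rfl <;> rcases ht with rfl | rfl
      · linear_combination (1/2) * h2A - (1/2) * hB - (1/2) * hC
      · linear_combination (-1/2) * h2A + (1/2) * hB + (1/2) * hC
      · linear_combination (-1/2) * h2A + (1/2) * hB + (1/2) * hC
      · linear_combination (1/2) * h2A - (1/2) * hB - (1/2) * hC
    have hBC := key y
    have hB'C' := key y'
    have e : (⟪f x, g y⟫ * ⟪x, y⟫) * (⟪f x', g y⟫ * ⟪x', y⟫) *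
        ((⟪f x, g y'⟫ * ⟪x, y'⟫) * (⟪f x', g y'⟫ * ⟪x', y'⟫)) =
        (⟪f x, g y⟫ * ⟪f x', g y⟫) * (⟪f x, g y'⟫ * ⟪f x', g y'⟫) *
        ((⟪x, y⟫ * ⟪x', y⟫) * (⟪x, y'⟫ * ⟪x', y'⟫)) := by ring
    rw [e, hBC, hB'C']
    have e2 : s * t * (⟪x, y⟫ * ⟪x', y⟫) * (s * t * (⟪x, y'⟫ * ⟪x', y'⟫)) *
        ((⟪x, y⟫ * ⟪x', y⟫) * (⟪x, y'⟫ * ⟪x', y'⟫)) =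
        (s ^ 2 * t ^ 2) * ((⟪x, y⟫ * ⟪x', y⟫) * (⟪x, y'⟫ * ⟪x', y'⟫)) ^ 2 := by ring
    rw [e2, hs2, ht2, one_mul, one_mul]
    have hne4 : (⟪x, y⟫ * ⟪x', y⟫) * (⟪x, y'⟫ * ⟪x', y'⟫) ≠ 0 :=
      mul_ne_zero (mul_ne_zero h1 h2) (mul_ne_zero h3 h4)
    exact lt_of_le_of_ne (sq_nonneg _) (Ne.symm (pow_ne_zero 2 hne4))
  -- choosers
  have hwex : ∀ x : H, ∃ y, x ≠ 0 → ⟪x, y⟫ ≠ 0 ∧ ⟪a, y⟫ ≠ 0 := by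
    intro x
    by_cases hx : x = 0
    · exact ⟨0, fun h => absurd hx h⟩
    · obtain ⟨v, hv⟩ := exists_inner_ne_zero [x, a] (by
        intro u hu; fin_cases hu <;> assumption)
      exact ⟨v, fun _ => ⟨hv x (by simp), hv a (by simp)⟩⟩
  choose w hw using hwex
  have hzex : ∀ y : H, ∃ x, y ≠ 0 → ⟪x, y⟫ ≠ 0 ∧ ⟪x, a⟫ ≠ 0 := by
    intro y
    by_cases hy : y = 0
    · exact ⟨0, fun h => absurd hy h⟩
    · obtain ⟨v, hv⟩ := exists_inner_ne_zero [y, a] (by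
        intro u hu; fin_cases hu <;> assumption)
      exact ⟨v, fun _ => ⟨by rw [real_inner_comm]; exact hv y (by simp),
        by rw [real_inner_comm]; exact hv a (by simp)⟩⟩
  choose z hz using hzex
  have haa : ⟪a, a⟫ ≠ 0 := inner_self_ne_zero.mpr ha
  -- sign corrections
  set ε : H → ℝ := fun x => msgn ((⟪f x, g (w x)⟫ * ⟪x, w x⟫) *
    ((⟪f a, g (w x)⟫ * ⟪a, w x⟫) * (⟪f a, g a⟫ * ⟪a, a⟫))) with hε
  set δ : H → ℝ := fun y => msgn (⟪f (z y), g y⟫ * ⟪z y, y⟫) * ε (z y) with hδ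
  have hεpm : ∀ x, ε x = 1 ∨ ε x = -1 := fun x => msgn_pm _
  have hδpm : ∀ y, δ y = 1 ∨ δ y = -1 := by
    intro y
    rcases msgn_pm (⟪f (z y), g y⟫ * ⟪z y, y⟫) with h1 | h1 <;>
      rcases hεpm (z y) with h2 | h2 <;> rw [hδ] <;> simp only [h1, h2] <;> norm_num
  -- the master positivity claim
  have M : ∀ x y : H, ⟪x, y⟫ ≠ 0 → 0 < ε x * δ y * (⟪f x, g y⟫ * ⟪x, y⟫) := by
    intro x y hxy
    have hx : x ≠ 0 := fun h => hxy (by rw [h, inner_zero_left])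
    have hy : y ≠ 0 := fun h => hxy (by rw [h, inner_zero_right])
    obtain ⟨hwx1, hwx2⟩ := hw x hx
    obtain ⟨hzy1, hzy2⟩ := hz y hy
    have hzyne : z y ≠ 0 := fun h => hzy1 (by rw [h, inner_zero_left])
    obtain ⟨hwz1, hwz2⟩ := hw (z y) hzyne
    obtain ⟨v, hv⟩ := exists_inner_ne_zero [x, a, z y] (by
      intro u hu; fin_cases hu <;> assumption)
    have hxv : ⟪x, v⟫ ≠ 0 := hv x (by simp)
    have hav : ⟪a, v⟫ ≠ 0 := hv a (by simp)
    have hzv : ⟪z y, v⟫ ≠ 0 := hv (z y) (by simp)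
    have K1 := K x a (w x) v hwx1 hwx2 hxv hav
    have K2 := K (z y) a (w (z y)) v hwz1 hwz2 hzv hav
    have K3 := K x (z y) y v hxy hzy1 hxv hzv
    -- abbreviations as equalities
    have hQ := mul_pos (mul_pos K1 K2) K3
    have hD2 : 0 < ((⟪f x, g v⟫ * ⟪x, v⟫) * ((⟪f a, g v⟫ * ⟪a, v⟫) *
        (⟪f (z y), g v⟫ * ⟪z y, v⟫))) ^ 2 := by
      have : (⟪f x, g v⟫ * ⟪x, v⟫) * ((⟪f a, g v⟫ * ⟪a, v⟫) *
          (⟪f (z y), g v⟫ * ⟪z y, v⟫)) ≠ 0 :=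
        mul_ne_zero (mul_ne_zero (hne x v hxv) hxv)
          (mul_ne_zero (mul_ne_zero (hne a v hav) hav)
            (mul_ne_zero (hne (z y) v hzv) hzv))
      exact lt_of_le_of_ne (sq_nonneg _) (Ne.symm (pow_ne_zero 2 this))
    have hABCD : 0 < ((⟪f x, g (w x)⟫ * ⟪x, w x⟫) *
          ((⟪f a, g (w x)⟫ * ⟪a, w x⟫) * (⟪f a, g a⟫ * ⟪a, a⟫))) *
        (⟪f (z y), g y⟫ * ⟪z y, y⟫) *
        ((⟪f (z y), g (w (z y))⟫ * ⟪z y, w (z y)⟫) *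
          ((⟪f a, g (w (z y))⟫ * ⟪a, w (z y)⟫) * (⟪f a, g a⟫ * ⟪a, a⟫))) *
        (⟪f x, g y⟫ * ⟪x, y⟫) := by
      apply pos_of_mul_pos_aux (Y := ((⟪f x, g v⟫ * ⟪x, v⟫) * ((⟪f a, g v⟫ * ⟪a, v⟫) *
        (⟪f (z y), g v⟫ * ⟪z y, v⟫))) ^ 2) _ hD2
      have erw : ((⟪f x, g (w x)⟫ * ⟪x, w x⟫) *
          ((⟪f a, g (w x)⟫ * ⟪a, w x⟫) * (⟪f a, g a⟫ * ⟪a, a⟫))) *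
        (⟪f (z y), g y⟫ * ⟪z y, y⟫) *
        ((⟪f (z y), g (w (z y))⟫ * ⟪z y, w (z y)⟫) *
          ((⟪f a, g (w (z y))⟫ * ⟪a, w (z y)⟫) * (⟪f a, g a⟫ * ⟪a, a⟫))) *
        (⟪f x, g y⟫ * ⟪x, y⟫) *
        ((⟪f x, g v⟫ * ⟪x, v⟫) * ((⟪f a, g v⟫ * ⟪a, v⟫) *
          (⟪f (z y), g v⟫ * ⟪z y, v⟫))) ^ 2 =
        ((⟪f x, g (w x)⟫ * ⟪x, w x⟫) * (⟪f a, g (w x)⟫ * ⟪a, w x⟫) *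
          ((⟪f x, g v⟫ * ⟪x, v⟫) * (⟪f a, g v⟫ * ⟪a, v⟫)) *
        ((⟪f (z y), g (w (z y))⟫ * ⟪z y, w (z y)⟫) * (⟪f a, g (w (z y))⟫ * ⟪a, w (z y)⟫) *
          ((⟪f (z y), g v⟫ * ⟪z y, v⟫) * (⟪f a, g v⟫ * ⟪a, v⟫))) *
        ((⟪f x, g y⟫ * ⟪x, y⟫) * (⟪f (z y), g y⟫ * ⟪z y, y⟫) *
          ((⟪f x, g v⟫ * ⟪x, v⟫) * (⟪f (z y), g v⟫ * ⟪z y, v⟫)))) *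
        (⟪f a, g a⟫ * ⟪a, a⟫) ^ 2 := by ring
      rw [erw]
      apply mul_pos hQ
      exact lt_of_le_of_ne (sq_nonneg _)
        (Ne.symm (pow_ne_zero 2 (mul_ne_zero (hne a a haa) haa)))
    rw [hε, hδ]
    have goalshape : msgn ((⟪f x, g (w x)⟫ * ⟪x, w x⟫) *
          ((⟪f a, g (w x)⟫ * ⟪a, w x⟫) * (⟪f a, g a⟫ * ⟪a, a⟫))) *
        (msgn (⟪f (z y), g y⟫ * ⟪z y, y⟫) *
          msgn ((⟪f (z y), g (w (z y))⟫ * ⟪z y, w (z y)⟫) *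
          ((⟪f a, g (w (z y))⟫ * ⟪a, w (z y)⟫) * (⟪f a, g a⟫ * ⟪a, a⟫)))) *
        (⟪f x, g y⟫ * ⟪x, y⟫) =
        msgn ((⟪f x, g (w x)⟫ * ⟪x, w x⟫) *
          ((⟪f a, g (w x)⟫ * ⟪a, w x⟫) * (⟪f a, g a⟫ * ⟪a, a⟫))) *
        (msgn (⟪f (z y), g y⟫ * ⟪z y, y⟫) *
          msgn ((⟪f (z y), g (w (z y))⟫ * ⟪z y, w (z y)⟫) *
          ((⟪f a, g (w (z y))⟫ * ⟪a, w (z y)⟫) * (⟪f a, g a⟫ * ⟪a, a⟫)))) *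
        (⟪f x, g y⟫ * ⟪x, y⟫) := rfl
    have hAne : (⟪f x, g (w x)⟫ * ⟪x, w x⟫) *
        ((⟪f a, g (w x)⟫ * ⟪a, w x⟫) * (⟪f a, g a⟫ * ⟪a, a⟫)) ≠ 0 :=
      mul_ne_zero (mul_ne_zero (hne x (w x) hwx1) hwx1)
        (mul_ne_zero (mul_ne_zero (hne a (w x) hwx2) hwx2)
          (mul_ne_zero (hne a a haa) haa))
    have hBne : ⟪f (z y), g y⟫ * ⟪z y, y⟫ ≠ 0 :=
      mul_ne_zero (hne (z y) y hzy1) hzy1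
    have hCne : (⟪f (z y), g (w (z y))⟫ * ⟪z y, w (z y)⟫) *
        ((⟪f a, g (w (z y))⟫ * ⟪a, w (z y)⟫) * (⟪f a, g a⟫ * ⟪a, a⟫)) ≠ 0 :=
      mul_ne_zero (mul_ne_zero (hne (z y) (w (z y)) hwz1) hwz1)
        (mul_ne_zero (mul_ne_zero (hne a (w (z y)) hwz2) hwz2)
          (mul_ne_zero (hne a a haa) haa))
    exact msgn3_pos hAne hBne hCne (by
      have e' : (⟪f x, g (w x)⟫ * ⟪x, w x⟫) *
          ((⟪f a, g (w x)⟫ * ⟪a, w x⟫) * (⟪f a, g a⟫ * ⟪a, a⟫)) *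
        (⟪f (z y), g y⟫ * ⟪z y, y⟫) *
        ((⟪f (z y), g (w (z y))⟫ * ⟪z y, w (z y)⟫) *
          ((⟪f a, g (w (z y))⟫ * ⟪a, w (z y)⟫) * (⟪f a, g a⟫ * ⟪a, a⟫))) *
        (⟪f x, g y⟫ * ⟪x, y⟫) = ((⟪f x, g (w x)⟫ * ⟪x, w x⟫) *
          ((⟪f a, g (w x)⟫ * ⟪a, w x⟫) * (⟪f a, g a⟫ * ⟪a, a⟫))) *
        (⟪f (z y), g y⟫ * ⟪z y, y⟫) *
        ((⟪f (z y), g (w (z y))⟫ * ⟪z y, w (z y)⟫) *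
          ((⟪f a, g (w (z y))⟫ * ⟪a, w (z y)⟫) * (⟪f a, g a⟫ * ⟪a, a⟫))) *
        (⟪f x, g y⟫ * ⟪x, y⟫) := by ring
      rw [e']
      exact hABCD)
  -- the corrected maps
  set U0 : H → H := fun x => ε x • f x with hU0
  set V0 : H → H := fun y => δ y • g y with hV0
  -- the fundamental identity
  have P : ∀ x y : H, ⟪U0 x, V0 y⟫ = ⟪x, y⟫ := by
    intro x y
    have hIP : ⟪U0 x, V0 y⟫ = (ε x * δ y) * ⟪f x, g y⟫ := by
      rw [hU0, hV0]
      simp only [real_inner_smul_left, real_inner_smul_right]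
      ring
    by_cases hxy : ⟪x, y⟫ = 0
    · rw [hIP, hvan x y hxy, hxy, mul_zero]
    · have hM := M x y hxy
      have hPc : ⟪f x, g y⟫ = ⟪x, y⟫ ∨ ⟪f x, g y⟫ = -⟪x, y⟫ := by
        have h := hfg x y
        have : (⟪f x, g y⟫ - ⟪x, y⟫) * (⟪f x, g y⟫ + ⟪x, y⟫) = 0 := by
          linear_combination h
        rcases mul_eq_zero.mp this with h' | h'
        · exact Or.inl (sub_eq_zero.mp h')
        · exact Or.inr (eq_neg_of_add_eq_zero_left h')
      rw [hIP]
      exact sign_resolve (hεpm x) (hδpm y) hPc hM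
  -- covering properties
  have hUcov : ∀ v : H, ∃ x, U0 x = v ∨ U0 x = -v := by
    intro v
    obtain ⟨x, hx⟩ := hfs v
    refine ⟨x, ?_⟩
    rcases hεpm x with he | he <;> rcases hx with h' | h' <;>
      rw [hU0] <;> simp only [he, h', one_smul, neg_smul, one_smul, neg_neg] <;> tauto
  have hVcov : ∀ v : H, ∃ y, V0 y = v ∨ V0 y = -v := by
    intro v
    obtain ⟨y, hy⟩ := hgs v
    refine ⟨y, ?_⟩
    rcases hδpm y with he | he <;> rcases hy with h' | h' <;>
      rw [hV0] <;> simp only [he, h', one_smul, neg_smul, one_smul, neg_neg] <;> tauto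
  have hkerV : ∀ u : H, (∀ y, ⟪u, V0 y⟫ = 0) → u = 0 := by
    intro u hu
    obtain ⟨y, hy⟩ := hVcov u
    rcases hy with h' | h'
    · have := hu y; rw [h'] at this; exact inner_self_eq_zero.mp this
    · have := hu y; rw [h', inner_neg_right, neg_eq_zero] at this
      exact inner_self_eq_zero.mp this
  have hkerU : ∀ u : H, (∀ x, ⟪U0 x, u⟫ = 0) → u = 0 := by
    intro u hu
    obtain ⟨x, hx⟩ := hUcov u
    rcases hx with h' | h'
    · have := hu x; rw [h'] at this; exact inner_self_eq_zero.mp this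
    · have := hu x; rw [h', inner_neg_left, neg_eq_zero] at this
      exact inner_self_eq_zero.mp this
  -- linearity of U0 and V0
  have hUadd : ∀ x x' : H, U0 (x + x') = U0 x + U0 x' := by
    intro x x'
    have : ∀ y, ⟪U0 (x + x') - (U0 x + U0 x'), V0 y⟫ = 0 := by
      intro y
      rw [inner_sub_left, inner_add_left, P, P, P, inner_add_left]
      ring
    have := hkerV _ this
    rwa [sub_eq_zero] at this
  have hUsmul : ∀ (c : ℝ) (x : H), U0 (c • x) = c • U0 x := by
    intro c x
    have : ∀ y, ⟪U0 (c • x) - c • U0 x, V0 y⟫ = 0 := by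
      intro y
      rw [inner_sub_left, P (c • x) y,
        show (⟪c • U0 x, V0 y⟫ : ℝ) = c * ⟪U0 x, V0 y⟫ from real_inner_smul_left _ _ _,
        P x y, show (⟪c • x, y⟫ : ℝ) = c * ⟪x, y⟫ from real_inner_smul_left _ _ _]
      ring
    have := hkerV _ this
    rwa [sub_eq_zero] at this
  have hVadd : ∀ y y' : H, V0 (y + y') = V0 y + V0 y' := by
    intro y y'
    have : ∀ x, ⟪U0 x, V0 (y + y') - (V0 y + V0 y')⟫ = 0 := by
      intro x
      rw [inner_sub_right, inner_add_right, P, P, P, inner_add_right]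
      ring
    have := hkerU _ this
    rwa [sub_eq_zero] at this
  have hVsmul : ∀ (c : ℝ) (y : H), V0 (c • y) = c • V0 y := by
    intro c y
    have : ∀ x, ⟪U0 x, V0 (c • y) - c • V0 y⟫ = 0 := by
      intro x
      rw [inner_sub_right, P x (c • y),
        show (⟪U0 x, c • V0 y⟫ : ℝ) = c * ⟪U0 x, V0 y⟫ from real_inner_smul_right _ _ _,
        P x y, show (⟪x, c • y⟫ : ℝ) = c * ⟪x, y⟫ from real_inner_smul_right _ _ _]
      ring
    have := hkerU _ this
    rwa [sub_eq_zero] at this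
  set Ulin : H →ₗ[ℝ] H :=
    { toFun := U0, map_add' := hUadd, map_smul' := hUsmul } with hUlin
  set Vlin : H →ₗ[ℝ] H :=
    { toFun := V0, map_add' := hVadd, map_smul' := hVsmul } with hVlin
  -- bijectivity
  have hUinj : Function.Injective Ulin := by
    intro x x' hxx
    have hz : ∀ y, ⟪x - x', y⟫ = 0 := by
      intro y
      rw [inner_sub_left, ← P x y, ← P x' y]
      show ⟪Ulin x, V0 y⟫ - ⟪Ulin x', V0 y⟫ = 0
      rw [hxx]; ring
    have := hz (x - x')
    rw [sub_eq_zero.mp (inner_self_eq_zero.mp this)]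
  have hUsurj : Function.Surjective Ulin := by
    intro v
    obtain ⟨x, hx⟩ := hUcov v
    rcases hx with h' | h'
    · exact ⟨x, h'⟩
    · refine ⟨-x, ?_⟩
      show U0 (-x) = v
      rw [show (-x : H) = (-1 : ℝ) • x by simp, hUsmul]
      rw [h']; simp
  have hVinj : Function.Injective Vlin := by
    intro y y' hyy
    have hz : ∀ x, ⟪x, y - y'⟫ = 0 := by
      intro x
      rw [inner_sub_right, ← P x y, ← P x y']
      show ⟪U0 x, Vlin y⟫ - ⟪U0 x, Vlin y'⟫ = 0
      rw [hyy]; ring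
    have := hz (y - y')
    rw [real_inner_comm] at this
    rw [sub_eq_zero.mp (inner_self_eq_zero.mp this)]
  have hVsurj : Function.Surjective Vlin := by
    intro v
    obtain ⟨y, hy⟩ := hVcov v
    rcases hy with h' | h'
    · exact ⟨y, h'⟩
    · refine ⟨-y, ?_⟩
      show V0 (-y) = v
      rw [show (-y : H) = (-1 : ℝ) • y by simp, hVsmul]
      rw [h']; simp
  -- continuity via the closed graph theorem
  have hUgraph : IsClosed (Ulin.graph : Set (H × H)) := by
    have heq : (Ulin.graph : Set (H × H)) =
        ⋂ y : H, {p : H × H | ⟪p.2, V0 y⟫ - ⟪p.1, y⟫ = 0} := by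
      ext ⟨x, u⟩
      simp only [SetLike.mem_coe, LinearMap.mem_graph_iff, Set.mem_iInter,
        Set.mem_setOf_eq]
      constructor
      · intro h' y
        rw [h']
        show ⟪U0 x, V0 y⟫ - ⟪x, y⟫ = 0
        rw [P]; ring
      · intro h'
        have : ∀ y, ⟪u - U0 x, V0 y⟫ = 0 := by
          intro y
          rw [inner_sub_left, P]
          have := h' y
          linarith
        have := hkerV _ this
        rw [sub_eq_zero] at this
        exact this
    rw [heq]
    exact isClosed_iInter fun y =>
      isClosed_eq ((continuous_snd.inner continuous_const).sub
        (continuous_fst.inner continuous_const)) continuous_const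
  have hVgraph : IsClosed (Vlin.graph : Set (H × H)) := by
    have heq : (Vlin.graph : Set (H × H)) =
        ⋂ x : H, {p : H × H | ⟪U0 x, p.2⟫ - ⟪x, p.1⟫ = 0} := by
      ext ⟨y, v⟩
      simp only [SetLike.mem_coe, LinearMap.mem_graph_iff, Set.mem_iInter,
        Set.mem_setOf_eq]
      constructor
      · intro h' x
        rw [h']
        show ⟪U0 x, V0 y⟫ - ⟪x, y⟫ = 0
        rw [P]; ring
      · intro h'
        have : ∀ x, ⟪U0 x, v - V0 y⟫ = 0 := by
          intro x
          rw [inner_sub_right, P]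
          have := h' x
          linarith
        have := hkerU _ this
        rw [sub_eq_zero] at this
        exact this
    rw [heq]
    exact isClosed_iInter fun x =>
      isClosed_eq ((continuous_const.inner continuous_snd).sub
        (continuous_const.inner continuous_fst)) continuous_const
  have hUcont : Continuous Ulin := Ulin.continuous_of_isClosed_graph hUgraph
  have hVcont : Continuous Vlin := Vlin.continuous_of_isClosed_graph hVgraph
  set Ueq : H ≃ₗ[ℝ] H := LinearEquiv.ofBijective Ulin ⟨hUinj, hUsurj⟩ with hUeq
  set Veq : H ≃ₗ[ℝ] H := LinearEquiv.ofBijective Vlin ⟨hVinj, hVsurj⟩ with hVeq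
  refine ⟨Ueq.toContinuousLinearEquivOfContinuous hUcont,
    Veq.toContinuousLinearEquivOfContinuous hVcont, ?_, ?_, ?_⟩
  · intro x
    show U0 x = f x ∨ U0 x = -f x
    rcases hεpm x with he | he <;> rw [hU0] <;> simp only [he, one_smul, neg_smul, one_smul] <;> tauto
  · intro y
    show V0 y = g y ∨ V0 y = -g y
    rcases hδpm y with he | he <;> rw [hV0] <;> simp only [he, one_smul, neg_smul, one_smul] <;> tauto
  · intro x y
    exact P x y

theorem wigner_pairs_of_ray_transformations_real
    {H : Type*} [NormedAddCommGroup H] [InnerProductSpace ℝ H] [CompleteSpace H]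
    (hdim : 3 ≤ Module.rank ℝ H)
    (T S : RaySpace H → RaySpace H)
    (hT : Function.Bijective T) (hS : Function.Bijective S)
    (h : ∀ x y u v : H, u ∈ (T ⟨ray x, x, rfl⟩).1 → v ∈ (S ⟨ray y, y, rfl⟩).1 →
      |⟪u, v⟫| = |⟪x, y⟫|) :
    ∃ U V : H ≃L[ℝ] H,
      (∀ x : H, (T ⟨ray x, x, rfl⟩).1 = ray (U x)) ∧
      (∀ x : H, (S ⟨ray x, x, rfl⟩).1 = ray (V x)) ∧
      (∀ x y : H, ⟪U x, V y⟫ = ⟪x, y⟫) := by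

  classical
  have hH : ∃ a : H, a ≠ 0 := by
    exact (rank_pos_iff_exists_ne_zero (R := ℝ) (M := H)).mp
      (lt_of_lt_of_le (by norm_num) hdim)
  obtain ⟨a, ha⟩ := hH
  have hfex : ∀ x : H, ∃ z, (T ⟨ray x, x, rfl⟩).1 = ray z := fun x => (T ⟨ray x, x, rfl⟩).2
  choose f hfdef using hfex
  have hgex : ∀ y : H, ∃ z, (S ⟨ray y, y, rfl⟩).1 = ray z := fun y => (S ⟨ray y, y, rfl⟩).2
  choose g hgdef using hgex
  have hmem : ∀ v : H, v ∈ ray v := fun v => Set.mem_insert _ _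
  have hray_cases : ∀ u v : H, ray u = ray v → u = v ∨ u = -v := by
    intro u v huv
    have hu : u ∈ ray v := huv ▸ hmem u
    simpa [ray] using hu
  have hfg : ∀ x y : H, ⟪f x, g y⟫ ^ 2 = ⟪x, y⟫ ^ 2 := by
    intro x y
    have habs := h x y (f x) (g y) (by rw [hfdef x]; exact hmem _)
      (by rw [hgdef y]; exact hmem _)
    have := congrArg (fun r : ℝ => r ^ 2) habs
    simpa [sq_abs] using this
  have hfs : ∀ v : H, ∃ x, f x = v ∨ f x = -v := by
    intro v
    obtain ⟨r, hr⟩ := hT.2 ⟨ray v, v, rfl⟩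
    obtain ⟨x, hx⟩ := r.2
    have hrx : r = ⟨ray x, x, rfl⟩ := Subtype.ext hx
    rw [hrx] at hr
    have : ray (f x) = ray v := by rw [← hfdef x, hr]
    exact ⟨x, hray_cases _ _ this⟩
  have hgs : ∀ v : H, ∃ y, g y = v ∨ g y = -v := by
    intro v
    obtain ⟨r, hr⟩ := hS.2 ⟨ray v, v, rfl⟩
    obtain ⟨y, hy⟩ := r.2
    have hry : r = ⟨ray y, y, rfl⟩ := Subtype.ext hy
    rw [hry] at hr
    have : ray (g y) = ray v := by rw [← hgdef y, hr]
    exact ⟨y, hray_cases _ _ this⟩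
  obtain ⟨U, V, hU, hV, hUV⟩ := wigner_aux a ha f g hfg hfs hgs
  refine ⟨U, V, ?_, ?_, hUV⟩
  · intro x
    rw [hfdef x]
    rcases hU x with h' | h'
    · rw [h']
    · rw [h']
      show ({f x, -f x} : Set H) = {-f x, -(-f x)}
      rw [neg_neg, Set.pair_comm]
  · intro y
    rw [hgdef y]
    rcases hV y with h' | h'
    · rw [h']
    · rw [h']
      show ({g y, -g y} : Set H) = {-g y, -(-g y)}
      rw [neg_neg, Set.pair_comm]
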